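/- Let G be a finite group with an abelian normal subgroup N of prime index such that G is non-abelian. Then the maximum number of pairwise non-commuting elements of G equals |N : Z(G)| + 1. -/

import Mathlib

open Subgroup

section Aux

variable {G : Type*} [Group G]

private lemma auxTop {p : ℕ} (hp : p.Prime) {N H : Subgroup G} (hNi : N.index = p)
    (hle : N ≤ H) {g : G} (hg : g ∈ H) (hgn : g ∉ N) : H = ⊤ := by
  have h1 : N.relIndex H * H.index = N.index := relIndex_mul_index hle
  rw [hNi] at h1
  have hdvd : H.index ∣ p := Dvd.intro_left _ h1
  rcases hp.eq_one_or_self_of_dvd _ hdvd with h | h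
  · exact index_eq_one.mp h
  · exfalso
    rw [h] at h1
    have hrel : N.relIndex H = 1 :=
      Nat.eq_of_mul_eq_mul_right hp.pos (by rw [one_mul]; exact h1)
    exact hgn (relIndex_eq_one.mp hrel hg)

private lemma memCenter {p : ℕ} (hp : p.Prime) {N : Subgroup G}
    (hNab : ∀ a ∈ N, ∀ b ∈ N, a * b = b * a) (hNi : N.index = p)
    {a x : G} (ha : a ∈ N) (hx : x ∉ N) (hc : Commute a x) : a ∈ center G := by
  have hle : N ≤ centralizer {a} := fun b hb =>
    mem_centralizer_singleton_iff.mpr (hNab b hb a ha)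
  have hxmem : x ∈ centralizer ({a} : Set G) :=
    mem_centralizer_singleton_iff.mpr hc.symm.eq
  have htop := auxTop hp hNi hle hxmem hx
  rw [mem_center_iff]
  intro g
  have hg : g ∈ centralizer ({a} : Set G) := by rw [htop]; trivial
  exact mem_centralizer_singleton_iff.mp hg

private lemma centralizerComm {p : ℕ} (hp : p.Prime) {N : Subgroup G} [hNn : N.Normal]
    (hNab : ∀ a ∈ N, ∀ b ∈ N, a * b = b * a) (hNi : N.index = p)
    {c : G} (hc : c ∉ N) :
    ∀ x y : G, Commute c x → Commute c y → Commute x y := by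
  haveI := Fact.mk hp
  haveI : IsCyclic (G ⧸ N) := isCyclic_of_prime_card (p := p) (by rw [← hNi]; rfl)
  intro x y hx hy
  set C := centralizer ({c} : Set G) with hC
  have hxC : x ∈ C := mem_centralizer_singleton_iff.mpr hx.symm.eq
  have hyC : y ∈ C := mem_centralizer_singleton_iff.mpr hy.symm.eq
  let f : C →* G ⧸ N := (QuotientGroup.mk' N).comp C.subtype
  have hker : f.ker ≤ center C := by
    intro g hg
    have hgN : (g : G) ∈ N := by
      simpa [f, MonoidHom.mem_ker, QuotientGroup.eq_one_iff] using hg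
    have hgc : Commute (g : G) c := mem_centralizer_singleton_iff.mp g.2
    have hgZ : (g : G) ∈ center G := memCenter hp hNab hNi hgN hc hgc
    rw [mem_center_iff]
    intro h
    exact Subtype.ext (mem_center_iff.mp hgZ (h : G))
  have hcomm := commutative_of_cyclic_center_quotient f hker ⟨x, hxC⟩ ⟨y, hyC⟩
  have h2 := congrArg (Subtype.val) hcomm
  exact (show x * y = y * x by simpa using h2)

private lemma existsC {p : ℕ} (hp : p.Prime) {N : Subgroup G} [hNn : N.Normal]
    (hNi : N.index = p) (t : G) {x : G} (hx : x ∉ N) :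
    ∃ c : G, Commute x c ∧ t⁻¹ * c ∈ N := by
  have hxmem : x ∈ centralizer ({x} : Set G) := mem_centralizer_singleton_iff.mpr rfl
  have htop : centralizer ({x} : Set G) ⊔ N = ⊤ :=
    auxTop hp hNi le_sup_right (mem_sup_left hxmem) hx
  have ht : t ∈ (↑(centralizer ({x} : Set G) ⊔ N) : Set G) := by
    rw [htop]; exact mem_top t
  rw [mul_normal] at ht
  obtain ⟨c, hc, n, hn, hcn⟩ := ht
  refine ⟨c, (mem_centralizer_singleton_iff.mp hc).symm, ?_⟩
  have heq : t⁻¹ * c = n⁻¹ := by rw [← hcn]; group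
  rw [heq]
  exact N.inv_mem hn

private lemma commuteAux {t n m : G} (hnm : n * m⁻¹ = m⁻¹ * n)
    (h : (t * n) * (t * m) = (t * m) * (t * n)) :
    (m⁻¹ * n) * t = t * (m⁻¹ * n) := by
  have h1 : n * t * m = m * t * n := by
    apply mul_left_cancel (a := t)
    calc t * (n * t * m) = (t * n) * (t * m) := by group
    _ = (t * m) * (t * n) := h
    _ = t * (m * t * n) := by group
  calc (m⁻¹ * n) * t = m⁻¹ * (n * t * m) * m⁻¹ := by group
  _ = m⁻¹ * (m * t * n) * m⁻¹ := by rw [h1]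
  _ = t * (n * m⁻¹) := by group
  _ = t * (m⁻¹ * n) := by rw [hnm]

end Aux

theorem stmt16 (G : Type*) [Group G] [Finite G] (p : ℕ) (hp : p.Prime)
    (hna : ¬ ∀ a b : G, a * b = b * a)
    (N : Subgroup G) (hNn : N.Normal) (hNab : ∀ a ∈ N, ∀ b ∈ N, a * b = b * a)
    (hNi : N.index = p) :
    IsGreatest {n : ℕ | ∃ S : Finset G, S.card = n ∧
        ∀ x ∈ S, ∀ y ∈ S, x ≠ y → ¬ Commute x y}
      ((center G).relIndex N + 1) := by
  classical
  haveI := Fact.mk hp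
  -- choose t outside N
  have htN : ∃ t, t ∉ N := by
    by_contra h
    push_neg at h
    have hN : N = ⊤ := (Subgroup.eq_top_iff' N).mpr h
    rw [hN, index_top] at hNi
    exact hp.ne_one hNi.symm
  obtain ⟨t, ht⟩ := htN
  -- choose a in N not central
  have haN : ∃ a ∈ N, a ∉ center G := by
    by_contra h
    push_neg at h
    have hle : N ≤ center G := h
    have hdvd : (center G).index ∣ p := hNi ▸ index_dvd_of_le hle
    rcases hp.eq_one_or_self_of_dvd _ hdvd with h1 | h1
    · have hZ : center G = ⊤ := index_eq_one.mp h1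
      exact hna fun a b =>
        (mem_center_iff.mp (show a ∈ center G by rw [hZ]; trivial) b).symm
    · haveI : IsCyclic (G ⧸ center G) :=
        isCyclic_of_prime_card (p := p) (by rw [← h1]; rfl)
      exact hna (commutative_of_cyclic_center_quotient (QuotientGroup.mk' (center G))
        (by rw [QuotientGroup.ker_mk']))
  obtain ⟨a, haN, haZ⟩ := haN
  set Q := N ⧸ (center G).subgroupOf N with hQdef
  haveI : Fintype Q := Fintype.ofFinite Q
  have hQcard : Fintype.card Q = (center G).relIndex N := by
    rw [← Nat.card_eq_fintype_card]; rfl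
  constructor
  · -- membership : construct a clique of size relindex + 1
    set rep : Q → G := fun q => t * ((Quotient.out q : N) : G) with hrep
    have hrepN : ∀ q, rep q ∉ N := by
      intro q hq
      have hmem : ((Quotient.out q : N) : G) ∈ N := (Quotient.out q).2
      have h2 := N.mul_mem hq (N.inv_mem hmem)
      simp only [hrep, mul_inv_cancel_right] at h2
      exact ht h2
    have hinj : Function.Injective rep := by
      intro q q' h
      have h1 : ((Quotient.out q : N) : G) = ((Quotient.out q' : N) : G) := mul_left_cancel h
      have h2 : (Quotient.out q : N) = Quotient.out q' := Subtype.ext h1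
      rw [← QuotientGroup.out_eq' q, ← QuotientGroup.out_eq' q', h2]
    refine ⟨insert a (Finset.image rep Finset.univ), ?_, ?_⟩
    · rw [Finset.card_insert_of_notMem, Finset.card_image_of_injective _ hinj,
        Finset.card_univ, hQcard]
      simp only [Finset.mem_image]
      rintro ⟨q, -, hq⟩
      exact hrepN q (by rw [hq]; exact haN)
    · intro x hx y hy hxy hcomm
      rw [Finset.mem_insert] at hx hy
      have key : ∀ q : Q, ¬ Commute a (rep q) := by
        intro q hcq
        exact haZ (memCenter hp hNab hNi haN (hrepN q) hcq)
      rcases hx with rfl | hx <;> rcases hy with rfl | hy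
      · exact hxy rfl
      · obtain ⟨q, -, rfl⟩ := Finset.mem_image.mp hy
        exact key q hcomm
      · obtain ⟨q, -, rfl⟩ := Finset.mem_image.mp hx
        exact key q hcomm.symm
      · obtain ⟨q, -, rfl⟩ := Finset.mem_image.mp hx
        obtain ⟨q', -, rfl⟩ := Finset.mem_image.mp hy
        have hqq : q ≠ q' := fun h => hxy (congrArg rep h)
        set n : G := ((Quotient.out q : N) : G) with hn
        set m : G := ((Quotient.out q' : N) : G) with hm
        have hnN : n ∈ N := (Quotient.out q).2
        have hmN : m ∈ N := (Quotient.out q').2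
        have hnm : n * m⁻¹ = m⁻¹ * n := hNab n hnN m⁻¹ (N.inv_mem hmN)
        have hct : Commute (m⁻¹ * n) t := commuteAux hnm hcomm
        have hmn : m⁻¹ * n ∈ N := N.mul_mem (N.inv_mem hmN) hnN
        have hz : m⁻¹ * n ∈ center G := memCenter hp hNab hNi hmn ht hct
        apply hqq.symm
        rw [← QuotientGroup.out_eq' q, ← QuotientGroup.out_eq' q']
        exact QuotientGroup.eq.mpr (mem_subgroupOf.mpr (by simpa using hz))
  · -- upper bound
    rintro k ⟨S, rfl, hS⟩
    have hfil := Finset.card_filter_add_card_filter_not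
      (s := S) (p := fun x => x ∈ N)
    have h1 : (S.filter (fun x => x ∈ N)).card ≤ 1 := by
      rw [Finset.card_le_one]
      intro x hx y hy
      rw [Finset.mem_filter] at hx hy
      by_contra hne
      exact hS x hx.1 y hy.1 hne (hNab x hx.2 y hy.2)
    have cspec : ∀ x (hx : x ∉ N), Commute x ((existsC hp hNi t hx).choose) ∧
        t⁻¹ * (existsC hp hNi t hx).choose ∈ N := fun x hx => (existsC hp hNi t hx).choose_spec
    let f : G → Q := fun x =>
      if hx : x ∉ N then QuotientGroup.mk ⟨t⁻¹ * (existsC hp hNi t hx).choose, (cspec x hx).2⟩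
      else 1
    have h2 : (S.filter (fun x => ¬ x ∈ N)).card ≤ (center G).relIndex N := by
      have hcard := Finset.card_le_card_of_injOn
        (s := S.filter (fun x => ¬ x ∈ N)) (t := (Finset.univ : Finset Q)) f
        (fun x _ => Finset.mem_univ (f x)) ?_
      · rwa [Finset.card_univ, hQcard] at hcard
      · intro x hx y hy hfxy
        rw [Finset.coe_filter, Set.mem_setOf_eq] at hx hy
        obtain ⟨hxS, hxN⟩ := hx
        obtain ⟨hyS, hyN⟩ := hy
        set cx := (existsC hp hNi t hxN).choose with hcx
        set cy := (existsC hp hNi t hyN).choose with hcy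
        have hfx : f x = QuotientGroup.mk ⟨t⁻¹ * cx, (cspec x hxN).2⟩ := dif_pos hxN
        have hfy : f y = QuotientGroup.mk ⟨t⁻¹ * cy, (cspec y hyN).2⟩ := dif_pos hyN
        rw [hfx, hfy, QuotientGroup.eq, mem_subgroupOf] at hfxy
        have hz : cx⁻¹ * cy ∈ center G := by
          simpa [mul_assoc] using hfxy
        have hxc : Commute x cx := (cspec x hxN).1
        have hyc : Commute y cy := (cspec y hyN).1
        have hycx : Commute y cx := by
          have hcomm : Commute y (cx⁻¹ * cy) := mem_center_iff.mp hz y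
          have heq : cx = cy * (cx⁻¹ * cy)⁻¹ := by group
          rw [heq]
          exact hyc.mul_right hcomm.inv_right
        have hcxN : cx ∉ N := by
          intro hmem
          have hti : t⁻¹ ∈ N := by
            have : t⁻¹ * cx * cx⁻¹ ∈ N := N.mul_mem (cspec x hxN).2 (N.inv_mem hmem)
            simpa [mul_assoc] using this
          exact ht (by simpa using N.inv_mem hti)
        have hfin := centralizerComm hp hNab hNi hcxN x y hxc.symm hycx.symm
        by_contra hne
        exact hS x hxS y hyS hne hfin
    omega
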